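/- arXiv:1006.3632 — 6 statements merged into one kernel-verified Lean document; each statement's English description precedes it below -/
import Mathlib

section
/- Let C(t) be a differentiable n×n real matrix-valued function on an interval I satisfying the Riccati-type equation dC/dt = M(t) applied as C·M·C minus N, i.e. dC/dt − C(t)M(t)C(t) + N(t) = 0, where M(t) and N(t) are continuous symmetric n×n matrix functions. If C(t₀) is symmetric at some t₀ ∈ I, then C(t) is symmetric for all t ∈ I. -/
open Matrix Set

/-- If a differentiable matrix function `C` on an interval satisfies the
Riccati-type equation `C' = C·M·C − N` with `M, N` continuous and symmetric, and `C` is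
symmetric at some point `t₀` of the interval, then `C` is symmetric on the whole interval. -/
theorem stmt_0 (n : ℕ) (a b t₀ : ℝ) (ht₀ : t₀ ∈ Ioo a b)
    (M N C : ℝ → Matrix (Fin n) (Fin n) ℝ)
    (hMcont : ContinuousOn M (Ioo a b)) (hNcont : ContinuousOn N (Ioo a b))
    (hMsymm : ∀ t ∈ Ioo a b, (M t)ᵀ = M t)
    (hNsymm : ∀ t ∈ Ioo a b, (N t)ᵀ = N t)
    (hC : ∀ t ∈ Ioo a b, ∀ i j, HasDerivAt (fun s => C s i j)
      ((C t * M t * C t - N t) i j) t)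
    (hC₀ : (C t₀)ᵀ = C t₀) :
    ∀ t ∈ Ioo a b, (C t)ᵀ = C t := by
  intro t1 ht1
  obtain ⟨a', ha'1, ha'2⟩ := exists_between (lt_min ht₀.1 ht1.1)
  obtain ⟨b', hb'1, hb'2⟩ := exists_between (max_lt ht₀.2 ht1.2)
  have hJ : Icc a' b' ⊆ Ioo a b := fun x hx => ⟨lt_of_lt_of_le ha'1 hx.1, lt_of_le_of_lt hx.2 hb'2⟩
  have ht₀' : t₀ ∈ Ioo a' b' :=
    ⟨lt_of_lt_of_le ha'2 (min_le_left _ _), lt_of_le_of_lt (le_max_left _ _) hb'1⟩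
  have ht1' : t1 ∈ Icc a' b' :=
    ⟨le_of_lt (lt_of_lt_of_le ha'2 (min_le_right _ _)),
     le_of_lt (lt_of_le_of_lt (le_max_right _ _) hb'1)⟩
  -- abbreviations
  set Pm : ℝ → Matrix (Fin n) (Fin n) ℝ := fun t => (C t)ᵀ * M t with hPm
  set Qm : ℝ → Matrix (Fin n) (Fin n) ℝ := fun t => M t * C t with hQm
  set y : ℝ → (Fin n × Fin n → ℝ) := fun t p => C t p.2 p.1 - C t p.1 p.2 with hy
  set v : ℝ → (Fin n × Fin n → ℝ) → (Fin n × Fin n → ℝ) := fun t x p =>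
    if t ∈ Icc a' b' then
      (∑ k, Pm t p.1 k * x (k, p.2)) + ∑ k, x (p.1, k) * Qm t k p.2
    else 0 with hv
  -- entrywise continuity
  have hCcont : ∀ i j, ContinuousOn (fun s => C s i j) (Ioo a b) :=
    fun i j t ht => ((hC t ht i j).continuousAt).continuousWithinAt
  have hMe : ∀ i j, ContinuousOn (fun s => M s i j) (Ioo a b) := by
    intro i j
    have h1 : Continuous (fun m : Matrix (Fin n) (Fin n) ℝ => m i j) :=
      (continuous_apply j).comp (continuous_apply i)
    exact h1.comp_continuousOn hMcont
  have hPe : ∀ i k, ContinuousOn (fun t => Pm t i k) (Icc a' b') := by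
    intro i k
    have : ContinuousOn (fun t => ∑ l, C t l i * M t l k) (Icc a' b') := by
      apply continuousOn_finset_sum
      intro l _
      exact ((hCcont l i).mono hJ).mul ((hMe l k).mono hJ)
    simpa [hPm, Matrix.mul_apply, Matrix.transpose_apply] using this
  have hQe : ∀ i k, ContinuousOn (fun t => Qm t i k) (Icc a' b') := by
    intro i k
    have : ContinuousOn (fun t => ∑ l, M t i l * C t l k) (Icc a' b') := by
      apply continuousOn_finset_sum
      intro l _
      exact ((hMe i l).mono hJ).mul ((hCcont l k).mono hJ)
    simpa [hQm, Matrix.mul_apply] using this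
  -- bound on entries
  obtain ⟨K0, hK0⟩ : ∃ K0, ∀ t ∈ Icc a' b',
      ‖(∑ p : Fin n × Fin n, (|Pm t p.1 p.2| + |Qm t p.1 p.2|))‖ ≤ K0 := by
    apply IsCompact.exists_bound_of_continuousOn isCompact_Icc
    apply continuousOn_finset_sum
    intro p _
    exact ((hPe p.1 p.2).abs).add ((hQe p.1 p.2).abs)
  have hK0nn : 0 ≤ K0 := le_trans (norm_nonneg _) (hK0 t₀ (Ioo_subset_Icc_self ht₀'))
  have hPb : ∀ t ∈ Icc a' b', ∀ i k, |Pm t i k| ≤ K0 := by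
    intro t ht i k
    refine le_trans ?_ (le_trans (le_abs_self _) (hK0 t ht))
    calc |Pm t i k| ≤ |Pm t i k| + |Qm t i k| := le_add_of_nonneg_right (abs_nonneg _)
    _ ≤ ∑ p : Fin n × Fin n, (|Pm t p.1 p.2| + |Qm t p.1 p.2|) := by
        refine Finset.single_le_sum (f := fun p : Fin n × Fin n => |Pm t p.1 p.2| + |Qm t p.1 p.2|)
          (fun p _ => by positivity) (Finset.mem_univ (i, k))
  have hQb : ∀ t ∈ Icc a' b', ∀ i k, |Qm t i k| ≤ K0 := by
    intro t ht i k
    refine le_trans ?_ (le_trans (le_abs_self _) (hK0 t ht))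
    calc |Qm t i k| ≤ |Pm t i k| + |Qm t i k| := le_add_of_nonneg_left (abs_nonneg _)
    _ ≤ ∑ p : Fin n × Fin n, (|Pm t p.1 p.2| + |Qm t p.1 p.2|) := by
        refine Finset.single_le_sum (f := fun p : Fin n × Fin n => |Pm t p.1 p.2| + |Qm t p.1 p.2|)
          (fun p _ => by positivity) (Finset.mem_univ (i, k))
  -- Lipschitz
  set K : NNReal := Real.toNNReal (2 * n * K0) with hK
  have hlip : ∀ t, LipschitzOnWith K (v t) univ := by
    intro t
    by_cases h : t ∈ Icc a' b'
    · apply LipschitzOnWith.of_dist_le_mul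
      intro x _ z _
      rw [dist_eq_norm]
      have hKd : (0:ℝ) ≤ ↑K * dist x z := by positivity
      rw [pi_norm_le_iff_of_nonneg hKd]
      intro p
      have hvx : (v t x - v t z) p =
          (∑ k, Pm t p.1 k * (x (k, p.2) - z (k, p.2)))
          + ∑ k, (x (p.1, k) - z (p.1, k)) * Qm t k p.2 := by
        simp only [hv, Pi.sub_apply, if_pos h, mul_sub, sub_mul, Finset.sum_sub_distrib]
        ring
      rw [hvx]
      have h1 : ∀ k : Fin n, |Pm t p.1 k * (x (k, p.2) - z (k, p.2))| ≤ K0 * dist x z := by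
        intro k
        rw [abs_mul]
        refine mul_le_mul (hPb t h p.1 k) ?_ (abs_nonneg _) hK0nn
        rw [← Real.dist_eq]
        exact dist_le_pi_dist x z (k, p.2)
      have h2 : ∀ k : Fin n, |(x (p.1, k) - z (p.1, k)) * Qm t k p.2| ≤ dist x z * K0 := by
        intro k
        rw [abs_mul]
        refine mul_le_mul ?_ (hQb t h k p.2) (abs_nonneg _) dist_nonneg
        rw [← Real.dist_eq]
        exact dist_le_pi_dist x z (p.1, k)
      calc ‖(∑ k, Pm t p.1 k * (x (k, p.2) - z (k, p.2)))
          + ∑ k, (x (p.1, k) - z (p.1, k)) * Qm t k p.2‖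
          ≤ ‖∑ k, Pm t p.1 k * (x (k, p.2) - z (k, p.2))‖
            + ‖∑ k, (x (p.1, k) - z (p.1, k)) * Qm t k p.2‖ := norm_add_le _ _
        _ ≤ (∑ k, |Pm t p.1 k * (x (k, p.2) - z (k, p.2))|)
            + ∑ k, |(x (p.1, k) - z (p.1, k)) * Qm t k p.2| := by
            gcongr <;> exact Finset.abs_sum_le_sum_abs _ _
        _ ≤ (∑ _k : Fin n, K0 * dist x z) + ∑ _k : Fin n, dist x z * K0 := by
            gcongr with k _ k _
            exacts [h1 k, h2 k]
        _ = 2 * n * K0 * dist x z := by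
            simp [Finset.sum_const, Finset.card_univ]
            ring
        _ ≤ ↑K * dist x z := by
            apply mul_le_mul_of_nonneg_right _ dist_nonneg
            exact Real.le_coe_toNNReal _
    · apply LipschitzOnWith.of_dist_le_mul
      intro x _ z _
      have hz : ∀ w : Fin n × Fin n → ℝ, v t w = 0 := fun w => funext fun p => if_neg h
      rw [hz x, hz z]
      simp only [dist_self]
      positivity
  -- derivative of y
  have hyd : ∀ t ∈ Ioo a' b', HasDerivAt y (v t (y t)) t := by
    intro t ht
    have htab : t ∈ Ioo a b := hJ (Ioo_subset_Icc_self ht)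
    have key : (C t * M t * C t - N t)ᵀ - (C t * M t * C t - N t)
        = Pm t * ((C t)ᵀ - C t) + ((C t)ᵀ - C t) * Qm t := by
      simp only [hPm, hQm, Matrix.transpose_sub, Matrix.transpose_mul,
        hMsymm t htab, hNsymm t htab]
      noncomm_ring
    rw [hasDerivAt_pi]
    intro p
    have h1 := (hC t htab p.2 p.1).sub (hC t htab p.1 p.2)
    have h2 : v t (y t) p = (C t * M t * C t - N t) p.2 p.1
        - (C t * M t * C t - N t) p.1 p.2 := by
      have hent := congrArg (fun X : Matrix (Fin n) (Fin n) ℝ => X p.1 p.2) key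
      simp only [hv, if_pos (Ioo_subset_Icc_self ht), hy, hPm, hQm] at hent ⊢
      simp only [Matrix.sub_apply, Matrix.transpose_apply, Matrix.add_apply,
        Matrix.mul_apply] at hent ⊢
      linarith [hent]
    rw [show (fun s => y s p) = fun s => C s p.2 p.1 - C s p.1 p.2 from rfl, h2]
    exact h1
  -- zero solution
  have hv0 : ∀ t, v t 0 = 0 := by
    intro t
    funext p
    by_cases h : t ∈ Icc a' b' <;> simp [hv, h]
  have hzd : ∀ t ∈ Ioo a' b', HasDerivAt (fun _ : ℝ => (0 : Fin n × Fin n → ℝ))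
      (v t ((fun _ : ℝ => (0 : Fin n × Fin n → ℝ)) t)) t := by
    intro t ht
    rw [hv0 t]
    exact hasDerivAt_const t 0
  -- uniqueness
  have heq : EqOn y (fun _ => 0) (Icc a' b') := by
    apply ODE_solution_unique_of_mem_Icc (s := fun _ => univ) (fun t _ => hlip t) ht₀'
    · exact continuousOn_pi.2 fun p => ((hCcont p.2 p.1).sub (hCcont p.1 p.2)).mono hJ
    · exact fun t ht => hyd t ht
    · exact fun t ht => mem_univ _
    · exact continuousOn_const
    · exact fun t ht => hzd t ht
    · exact fun t ht => mem_univ _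
    · funext p
      simp only [hy]
      have := congrArg (fun X : Matrix (Fin n) (Fin n) ℝ => X p.1 p.2) hC₀
      simp only [Matrix.transpose_apply] at this
      simp [this]
  have hy1 : y t1 = 0 := heq ht1'
  ext i j
  rw [Matrix.transpose_apply]
  have := congrFun hy1 (j, i)
  simp only [hy, Pi.zero_apply] at this
  linarith
end

section
/- With the hypotheses of the previous linearization (K' = M·E, E' = N·K with M, N continuous and symmetric), if additionally the initial data are E(t₀) = 0 and K(t₀) = I (the identity matrix), then C(t) = −E(t)·K(t)⁻¹ is symmetric on any interval containing t₀ on which K(t) remains invertible. -/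
open Matrix Set

lemma const_of_deriv_zero_Ioo (f : ℝ → ℝ) {a b x y : ℝ}
    (h : ∀ t ∈ Ioo a b, HasDerivAt f 0 t) (hx : x ∈ Ioo a b) (hy : y ∈ Ioo a b) :
    f x = f y := by
  apply (convex_Ioo a b).is_const_of_fderivWithin_eq_zero (𝕜 := ℝ)
    (fun t ht => (h t ht).differentiableAt.differentiableWithinAt) _ hx hy
  intro t ht
  rw [fderivWithin_of_isOpen isOpen_Ioo ht, (h t ht).hasFDerivAt.fderiv]
  ext z
  simp

/-- With `K' = M·E`, `E' = N·K`, `M, N` continuous and symmetric, and initial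
data `E t₀ = 0`, `K t₀ = 1`, the matrix `C := −E·K⁻¹` is symmetric on any (sub)interval
containing `t₀` on which `K` remains invertible. -/
theorem stmt_2 (n : ℕ) (a b c d t₀ : ℝ) (hsub : Ioo c d ⊆ Ioo a b)
    (ht₀ : t₀ ∈ Ioo c d)
    (M N K E : ℝ → Matrix (Fin n) (Fin n) ℝ)
    (hMcont : ContinuousOn M (Ioo a b)) (hNcont : ContinuousOn N (Ioo a b))
    (hMsymm : ∀ t ∈ Ioo a b, (M t)ᵀ = M t)
    (hNsymm : ∀ t ∈ Ioo a b, (N t)ᵀ = N t)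
    (hK : ∀ t ∈ Ioo a b, ∀ i j, HasDerivAt (fun s => K s i j) ((M t * E t) i j) t)
    (hE : ∀ t ∈ Ioo a b, ∀ i j, HasDerivAt (fun s => E s i j) ((N t * K t) i j) t)
    (hE₀ : E t₀ = 0) (hK₀ : K t₀ = 1)
    (hinv : ∀ t ∈ Ioo c d, IsUnit (K t).det) :
    ∀ t ∈ Ioo c d, (-(E t) * (K t)⁻¹ : Matrix (Fin n) (Fin n) ℝ)ᵀ
      = -(E t) * (K t)⁻¹ := by
  have hW : ∀ i j, ∀ t ∈ Ioo a b,
      HasDerivAt (fun s => ((K s)ᵀ * E s - (E s)ᵀ * K s) i j) 0 t := by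
    intro i j t ht
    have h1 : HasDerivAt (fun s => ((K s)ᵀ * E s - (E s)ᵀ * K s) i j)
        ((((M t * E t)ᵀ * E t + (K t)ᵀ * (N t * K t)) -
          ((N t * K t)ᵀ * K t + (E t)ᵀ * (M t * E t))) i j) t := by
      simp only [Matrix.sub_apply, Matrix.add_apply, Matrix.mul_apply,
        Matrix.transpose_apply, ← Finset.sum_add_distrib]
      apply HasDerivAt.sub
      · apply HasDerivAt.fun_sum; intro k _
        exact (hK t ht k i).mul (hE t ht k j)
      · apply HasDerivAt.fun_sum; intro k _
        exact (hE t ht k i).mul (hK t ht k j)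
    have h2 : (((M t * E t)ᵀ * E t + (K t)ᵀ * (N t * K t)) -
          ((N t * K t)ᵀ * K t + (E t)ᵀ * (M t * E t))) = 0 := by
      simp [Matrix.transpose_mul, hMsymm t ht, hNsymm t ht, Matrix.mul_assoc]
      abel
    rw [h2] at h1; simpa using h1
  have hKE : ∀ t ∈ Ioo c d, (K t)ᵀ * E t = (E t)ᵀ * K t := by
    intro t ht
    rw [← sub_eq_zero]
    ext i j
    have := const_of_deriv_zero_Ioo _ (hW i j) (hsub ht) (hsub ht₀)
    rw [this]
    simp [hE₀, hK₀]
  intro t ht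
  have hu := hinv t ht
  have huT : IsUnit (K t)ᵀ.det := by rwa [Matrix.det_transpose]
  have key : E t * (K t)⁻¹ = ((K t)ᵀ)⁻¹ * (E t)ᵀ := by
    have h1 : (K t)ᵀ * (E t * (K t)⁻¹) = (E t)ᵀ := by
      rw [← Matrix.mul_assoc, hKE t ht, Matrix.mul_assoc,
        Matrix.mul_nonsing_inv _ hu, Matrix.mul_one]
    calc E t * (K t)⁻¹ = ((K t)ᵀ)⁻¹ * ((K t)ᵀ * (E t * (K t)⁻¹)) := by
          rw [← Matrix.mul_assoc, Matrix.nonsing_inv_mul _ huT, Matrix.one_mul]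
      _ = _ := by rw [h1]
  rw [Matrix.transpose_mul, Matrix.transpose_nonsing_inv, Matrix.transpose_neg,
    Matrix.neg_mul, Matrix.mul_neg, ← key]
end

section
/- (Sufficiency of the Riccati solution for positivity of the second variation) Let G : [t₀,t₁] → Matrix (Fin r) (Fin r) ℝ be continuous, symmetric, and positive definite for every t; let B : [t₀,t₁] → Matrix (Fin n) (Fin r) ℝ and N : [t₀,t₁] → Matrix (Fin n) (Fin n) ℝ be continuous with N symmetric; and suppose there exists a C¹ symmetric matrix function C(t) on [t₀,t₁] solving C' − C·B·G⁻¹·Bᵀ·C + N = 0. Then for every C¹ pair (X, Y) : [t₀,t₁] → ℝⁿ × ℝʳ satisfying X'(t) = B(t)·Y(t) (up to the connection terms absorbed into the derivative) with X(t₀) = X(t₁) = 0 and (X,Y) not identically zero, ∫_{t₀}^{t₁} [ Xᵀ N X + 2 Xᵀ C B Y + Yᵀ G Y + (d/dt)(Xᵀ C X) ] dt = ∫_{t₀}^{t₁} Ỹᵀ G Ỹ dt > 0, where Ỹ = Y + G⁻¹ Bᵀ C X. In particular ∫ (Xᵀ N X + Yᵀ G Y) dt > 0 since the total-derivative term integrates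 to zero. -/
open Matrix Set intervalIntegral

section helpers
variable {X : Type*} [TopologicalSpace X] {S : Set X} {a b c : ℕ}

theorem myCO_mul {A : X → Matrix (Fin a) (Fin b) ℝ} {B : X → Matrix (Fin b) (Fin c) ℝ}
    (hA : ContinuousOn A S) (hB : ContinuousOn B S) :
    ContinuousOn (fun x => A x * B x) S :=
  ((continuous_fst.matrix_mul continuous_snd) :
      Continuous fun p : Matrix (Fin a) (Fin b) ℝ × Matrix (Fin b) (Fin c) ℝ =>
        p.1 * p.2).comp_continuousOn (hA.prodMk hB)

theorem myCO_mulVec {A : X → Matrix (Fin a) (Fin b) ℝ} {v : X → Fin b → ℝ}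
    (hA : ContinuousOn A S) (hv : ContinuousOn v S) :
    ContinuousOn (fun x => A x *ᵥ v x) S :=
  ((continuous_fst.matrix_mulVec continuous_snd) :
      Continuous fun p : Matrix (Fin a) (Fin b) ℝ × (Fin b → ℝ) =>
        p.1 *ᵥ p.2).comp_continuousOn (hA.prodMk hv)

theorem myCO_dot {v w : X → Fin b → ℝ} (hv : ContinuousOn v S) (hw : ContinuousOn w S) :
    ContinuousOn (fun x => v x ⬝ᵥ w x) S :=
  ((continuous_fst.dotProduct continuous_snd) :
      Continuous fun p : (Fin b → ℝ) × (Fin b → ℝ) => p.1 ⬝ᵥ p.2).comp_continuousOn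
    (hv.prodMk hw)

theorem myCO_transpose {A : X → Matrix (Fin a) (Fin b) ℝ} (hA : ContinuousOn A S) :
    ContinuousOn (fun x => (A x)ᵀ) S :=
  ((continuous_id.matrix_transpose :
      Continuous fun M : Matrix (Fin a) (Fin b) ℝ => Mᵀ)).comp_continuousOn hA

end helpers

theorem dp_flip {p q : ℕ} (M : Matrix (Fin p) (Fin q) ℝ) (x : Fin q → ℝ) (w : Fin p → ℝ) :
    (M *ᵥ x) ⬝ᵥ w = x ⬝ᵥ Mᵀ *ᵥ w := by
  simp only [dotProduct, mulVec, transpose_apply, Finset.sum_mul, Finset.mul_sum]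
  rw [Finset.sum_comm]
  exact Finset.sum_congr rfl fun j _ => Finset.sum_congr rfl fun i _ => by ring

theorem key_alg {n r : ℕ} (g : Matrix (Fin r) (Fin r) ℝ) (b : Matrix (Fin n) (Fin r) ℝ)
    (c Nm : Matrix (Fin n) (Fin n) ℝ) (x : Fin n → ℝ) (y : Fin r → ℝ)
    (hg : gᵀ = g) (hginv : g * g⁻¹ = 1) (hginv' : g⁻¹ * g = 1) (hc : cᵀ = c) :
    x ⬝ᵥ Nm *ᵥ x + y ⬝ᵥ g *ᵥ y +
      ((b *ᵥ y) ⬝ᵥ (c *ᵥ x) + x ⬝ᵥ ((c * b * g⁻¹ * bᵀ * c - Nm) *ᵥ x) + x ⬝ᵥ (c *ᵥ (b *ᵥ y)))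
    = (y + (g⁻¹ * bᵀ * c) *ᵥ x) ⬝ᵥ g *ᵥ (y + (g⁻¹ * bᵀ * c) *ᵥ x) := by
  have hMT : (g⁻¹ * bᵀ * c)ᵀ = c * b * g⁻¹ := by
    rw [transpose_mul, transpose_mul, transpose_nonsing_inv, hg, hc, transpose_transpose,
      Matrix.mul_assoc]
  have e1 : g * (g⁻¹ * bᵀ * c) = bᵀ * c := by
    rw [← Matrix.mul_assoc, ← Matrix.mul_assoc, hginv, Matrix.one_mul]
  have e2 : c * b * g⁻¹ * g = c * b := by
    rw [Matrix.mul_assoc, hginv', Matrix.mul_one]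
  have e3 : c * b * g⁻¹ * (bᵀ * c) = c * b * g⁻¹ * bᵀ * c := by
    rw [← Matrix.mul_assoc]
  rw [Matrix.mulVec_add, dotProduct_add, add_dotProduct, add_dotProduct,
    dp_flip (g⁻¹ * bᵀ * c) x (g *ᵥ y), dp_flip (g⁻¹ * bᵀ * c) x (g *ᵥ _), hMT,
    mulVec_mulVec, mulVec_mulVec, mulVec_mulVec, mulVec_mulVec, e1]
  rw [e2, e3]
  rw [dp_flip b y (c *ᵥ x), mulVec_mulVec, Matrix.sub_mulVec, dotProduct_sub]
  ring

theorem deriv_quad {n : ℕ} {C : ℝ → Matrix (Fin n) (Fin n) ℝ} {X : ℝ → Fin n → ℝ}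
    {C' : Matrix (Fin n) (Fin n) ℝ} {X' : Fin n → ℝ} {s : Set ℝ} {t : ℝ}
    (hC : ∀ i j, HasDerivWithinAt (fun u => C u i j) (C' i j) s t)
    (hX : HasDerivWithinAt X X' s t) :
    HasDerivWithinAt (fun u => X u ⬝ᵥ C u *ᵥ X u)
      (X' ⬝ᵥ (C t *ᵥ X t) + X t ⬝ᵥ (C' *ᵥ X t) + X t ⬝ᵥ (C t *ᵥ X')) s t := by
  have hXi : ∀ i, HasDerivWithinAt (fun u => X u i) (X' i) s t := fun i =>
    (hasDerivWithinAt_pi.1 hX) i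
  have hterm : ∀ i j, HasDerivWithinAt (fun u => X u i * C u i j * X u j)
      ((X' i * C t i j + X t i * C' i j) * X t j + X t i * C t i j * X' j) s t :=
    fun i j => ((hXi i).mul (hC i j)).mul (hXi j)
  have hsum : HasDerivWithinAt (fun u => ∑ i : Fin n, ∑ j : Fin n, X u i * C u i j * X u j)
      (∑ i : Fin n, ∑ j : Fin n,
        ((X' i * C t i j + X t i * C' i j) * X t j + X t i * C t i j * X' j)) s t :=
    HasDerivWithinAt.fun_sum fun i _ => HasDerivWithinAt.fun_sum fun j _ => hterm i j
  have h1 : (fun u => X u ⬝ᵥ C u *ᵥ X u)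
      = fun u => ∑ i : Fin n, ∑ j : Fin n, X u i * C u i j * X u j := by
    funext u
    simp only [dotProduct, mulVec, Finset.mul_sum]
    exact Finset.sum_congr rfl fun i _ => Finset.sum_congr rfl fun j _ => by ring
  have h2 : X' ⬝ᵥ (C t *ᵥ X t) + X t ⬝ᵥ (C' *ᵥ X t) + X t ⬝ᵥ (C t *ᵥ X')
      = ∑ i : Fin n, ∑ j : Fin n,
        ((X' i * C t i j + X t i * C' i j) * X t j + X t i * C t i j * X' j) := by
    simp only [dotProduct, mulVec, Finset.mul_sum, ← Finset.sum_add_distrib]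
    exact Finset.sum_congr rfl fun i _ => Finset.sum_congr rfl fun j _ => by ring
  rw [h1, h2]
  exact hsum

theorem mulVec_norm_le {n m : ℕ} (A : Matrix (Fin n) (Fin m) ℝ) (x : Fin m → ℝ) :
    ‖A *ᵥ x‖ ≤ (∑ i, ∑ j, |A i j|) * ‖x‖ := by
  have hnn : (0:ℝ) ≤ (∑ i, ∑ j, |A i j|) * ‖x‖ :=
    mul_nonneg (Finset.sum_nonneg fun i _ => Finset.sum_nonneg fun j _ => abs_nonneg _)
      (norm_nonneg _)
  rw [pi_norm_le_iff_of_nonneg hnn]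
  intro i
  have h1 : ‖(A *ᵥ x) i‖ ≤ ∑ j, |A i j| * ‖x‖ := by
    calc ‖(A *ᵥ x) i‖ = |∑ j, A i j * x j| := rfl
      _ ≤ ∑ j, |A i j * x j| := Finset.abs_sum_le_sum_abs _ _
      _ ≤ ∑ j, |A i j| * ‖x‖ := by
          refine Finset.sum_le_sum fun j _ => ?_
          rw [abs_mul]
          exact mul_le_mul_of_nonneg_left (norm_le_pi_norm x j) (abs_nonneg _)
  calc ‖(A *ᵥ x) i‖ ≤ ∑ j, |A i j| * ‖x‖ := h1
    _ = (∑ j, |A i j|) * ‖x‖ := by rw [Finset.sum_mul]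
    _ ≤ (∑ i, ∑ j, |A i j|) * ‖x‖ := by
        refine mul_le_mul_of_nonneg_right ?_ (norm_nonneg _)
        exact Finset.single_le_sum (f := fun i => ∑ j, |A i j|)
          (fun i _ => Finset.sum_nonneg fun j _ => abs_nonneg _) (Finset.mem_univ i)

/-- Sufficiency of a global symmetric Riccati solution for positivity of
the second variation (coordinate form of Theorem 3.3). With `G` continuous symmetric
positive definite, `N` continuous symmetric, `B` continuous, and `C` a `C¹` symmetric
solution of `C' − C·B·G⁻¹·Bᵀ·C + N = 0` on `[t₀,t₁]`, every admissible nonzero pair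
`(X,Y)` with `X' = B·Y` vanishing at the endpoints satisfies the pointwise completion
identity `XᵀNX + YᵀGY + (XᵀCX)' = ỸᵀGỸ` with `Ỹ = Y + G⁻¹BᵀC X`, and the second
variation `∫ (XᵀNX + YᵀGY) dt = ∫ ỸᵀGỸ dt > 0`. -/
theorem stmt_13 (n r : ℕ) (t₀ t₁ : ℝ) (h : t₀ < t₁)
    (G : ℝ → Matrix (Fin r) (Fin r) ℝ) (hGc : ContinuousOn G (Icc t₀ t₁))
    (hGs : ∀ t ∈ Icc t₀ t₁, (G t)ᵀ = G t)
    (hGpos : ∀ t ∈ Icc t₀ t₁, ∀ v : Fin r → ℝ, v ≠ 0 → 0 < v ⬝ᵥ (G t).mulVec v)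
    (B : ℝ → Matrix (Fin n) (Fin r) ℝ) (hBc : ContinuousOn B (Icc t₀ t₁))
    (N : ℝ → Matrix (Fin n) (Fin n) ℝ) (hNc : ContinuousOn N (Icc t₀ t₁))
    (hNs : ∀ t ∈ Icc t₀ t₁, (N t)ᵀ = N t)
    (C : ℝ → Matrix (Fin n) (Fin n) ℝ)
    (hCs : ∀ t ∈ Icc t₀ t₁, (C t)ᵀ = C t)
    (hCd : ∀ t ∈ Icc t₀ t₁, ∀ i j, HasDerivWithinAt (fun s => C s i j)
      ((C t * B t * (G t)⁻¹ * (B t)ᵀ * C t - N t) i j) (Icc t₀ t₁) t)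
    (X : ℝ → Fin n → ℝ) (Y : ℝ → Fin r → ℝ)
    (hXc : ContinuousOn X (Icc t₀ t₁)) (hYc : ContinuousOn Y (Icc t₀ t₁))
    (hvar : ∀ t ∈ Icc t₀ t₁, HasDerivWithinAt X ((B t).mulVec (Y t)) (Icc t₀ t₁) t)
    (hX0 : X t₀ = 0) (hX1 : X t₁ = 0)
    (hnz : ∃ t ∈ Icc t₀ t₁, X t ≠ 0 ∨ Y t ≠ 0)
    (Ytil : ℝ → Fin r → ℝ)
    (hYtil : ∀ t, Ytil t = Y t + ((G t)⁻¹ * (B t)ᵀ * C t).mulVec (X t)) :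
    (∀ t ∈ Icc t₀ t₁,
      X t ⬝ᵥ (N t).mulVec (X t) + Y t ⬝ᵥ (G t).mulVec (Y t) +
          derivWithin (fun s => X s ⬝ᵥ (C s).mulVec (X s)) (Icc t₀ t₁) t
        = Ytil t ⬝ᵥ (G t).mulVec (Ytil t)) ∧
    (∫ t in t₀..t₁, (X t ⬝ᵥ (N t).mulVec (X t) + Y t ⬝ᵥ (G t).mulVec (Y t)))
      = (∫ t in t₀..t₁, Ytil t ⬝ᵥ (G t).mulVec (Ytil t)) ∧
    0 < (∫ t in t₀..t₁, Ytil t ⬝ᵥ (G t).mulVec (Ytil t)) ∧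
    0 < ∫ t in t₀..t₁, (X t ⬝ᵥ (N t).mulVec (X t) + Y t ⬝ᵥ (G t).mulVec (Y t)) := by
  have hS : t₀ ≤ t₁ := h.le
  set S : Set ℝ := Icc t₀ t₁ with hSdef
  -- invertibility of G
  have hdet : ∀ t ∈ S, IsUnit (G t).det := by
    intro t ht
    rw [isUnit_iff_ne_zero]
    intro h0
    obtain ⟨v, hv, hv0⟩ := Matrix.exists_mulVec_eq_zero_iff.2 h0
    have := hGpos t ht v hv
    rw [hv0, dotProduct_zero] at this
    exact lt_irrefl 0 this
  have hginv1 : ∀ t ∈ S, G t * (G t)⁻¹ = 1 := fun t ht => Matrix.mul_nonsing_inv _ (hdet t ht)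
  have hginv2 : ∀ t ∈ S, (G t)⁻¹ * G t = 1 := fun t ht => Matrix.nonsing_inv_mul _ (hdet t ht)
  -- continuity of G⁻¹
  have hdetc : ContinuousOn (fun t => (G t).det) S :=
    ((continuous_id.matrix_det :
      Continuous fun M : Matrix (Fin r) (Fin r) ℝ => M.det)).comp_continuousOn hGc
  have hadjc : ContinuousOn (fun t => (G t).adjugate) S :=
    ((continuous_id.matrix_adjugate :
      Continuous fun M : Matrix (Fin r) (Fin r) ℝ => M.adjugate)).comp_continuousOn hGc
  have hGic : ContinuousOn (fun t => (G t)⁻¹) S := by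
    have : (fun t => (G t)⁻¹) = fun t => ((G t).det)⁻¹ • (G t).adjugate := by
      funext t
      rw [Matrix.inv_def, Ring.inverse_eq_inv]
    rw [this]
    exact (hdetc.inv₀ fun t ht => (hdet t ht).ne_zero).smul hadjc
  -- continuity of C
  have hCc : ContinuousOn C S := by
    apply continuousOn_pi.2
    intro i
    apply continuousOn_pi.2
    intro j
    exact fun t ht => ((hCd t ht i j).continuousWithinAt)
  -- continuity of Ytil
  have hMc : ContinuousOn (fun t => (G t)⁻¹ * (B t)ᵀ * C t) S :=
    myCO_mul (myCO_mul hGic (myCO_transpose hBc)) hCc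
  have hYtc : ContinuousOn Ytil S := by
    refine ContinuousOn.congr (hYc.add (myCO_mulVec hMc hXc)) ?_
    intro t _
    exact hYtil t
  -- the derivative of the quadratic form
  set f : ℝ → ℝ := fun s => X s ⬝ᵥ (C s).mulVec (X s) with hfdef
  set D : ℝ → ℝ := fun t => (B t *ᵥ Y t) ⬝ᵥ (C t *ᵥ X t) +
      X t ⬝ᵥ ((C t * B t * (G t)⁻¹ * (B t)ᵀ * C t - N t) *ᵥ X t) +
      X t ⬝ᵥ (C t *ᵥ (B t *ᵥ Y t)) with hDdef
  have hD : ∀ t ∈ S, HasDerivWithinAt f (D t) S t := by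
    intro t ht
    exact deriv_quad (hCd t ht) (hvar t ht)
  have hdw : ∀ t ∈ S, derivWithin f S t = D t := fun t ht =>
    (hD t ht).derivWithin ((uniqueDiffOn_Icc h) t ht)
  -- Part 1 : pointwise identity
  have part1 : ∀ t ∈ S,
      X t ⬝ᵥ (N t).mulVec (X t) + Y t ⬝ᵥ (G t).mulVec (Y t) + derivWithin f S t
        = Ytil t ⬝ᵥ (G t).mulVec (Ytil t) := by
    intro t ht
    rw [hdw t ht, hYtil t]
    exact key_alg (G t) (B t) (C t) (N t) (X t) (Y t) (hGs t ht) (hginv1 t ht)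
      (hginv2 t ht) (hCs t ht)
  -- continuity of the integrands
  set P : ℝ → ℝ := fun t => X t ⬝ᵥ (N t).mulVec (X t) + Y t ⬝ᵥ (G t).mulVec (Y t) with hPdef
  set φ : ℝ → ℝ := fun t => Ytil t ⬝ᵥ (G t).mulVec (Ytil t) with hφdef
  have hPc : ContinuousOn P S :=
    (myCO_dot hXc (myCO_mulVec hNc hXc)).add (myCO_dot hYc (myCO_mulVec hGc hYc))
  have hφc : ContinuousOn φ S := myCO_dot hYtc (myCO_mulVec hGc hYtc)
  have hDc : ContinuousOn D S := by
    refine ((myCO_dot (myCO_mulVec hBc hYc) (myCO_mulVec hCc hXc)).add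
      (myCO_dot hXc (myCO_mulVec ?_ hXc))).add
      (myCO_dot hXc (myCO_mulVec hCc (myCO_mulVec hBc hYc)))
    exact (myCO_mul (myCO_mul (myCO_mul (myCO_mul hCc hBc) hGic) (myCO_transpose hBc)) hCc).sub hNc
  have hPint : IntervalIntegrable P MeasureTheory.volume t₀ t₁ :=
    (by rwa [uIcc_of_le hS] : ContinuousOn P (uIcc t₀ t₁)).intervalIntegrable
  have hφint : IntervalIntegrable φ MeasureTheory.volume t₀ t₁ :=
    (by rwa [uIcc_of_le hS] : ContinuousOn φ (uIcc t₀ t₁)).intervalIntegrable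
  have hDint : IntervalIntegrable D MeasureTheory.volume t₀ t₁ :=
    (by rwa [uIcc_of_le hS] : ContinuousOn D (uIcc t₀ t₁)).intervalIntegrable
  -- FTC : the derivative term integrates to zero
  have hfc : ContinuousOn f S := myCO_dot hXc (myCO_mulVec hCc hXc)
  have hint0 : (∫ t in t₀..t₁, D t) = 0 := by
    have := integral_eq_sub_of_hasDeriv_right_of_le hS hfc
      (fun x hx => ((hD x (Ioo_subset_Icc_self hx)).hasDerivAt
        (Icc_mem_nhds hx.1 hx.2)).hasDerivWithinAt) hDint
    rw [this]
    simp [hfdef, hX0, hX1]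
  -- Part 2 : equality of integrals
  have part2 : (∫ t in t₀..t₁, P t) = ∫ t in t₀..t₁, φ t := by
    have hcong : (∫ t in t₀..t₁, P t) = ∫ t in t₀..t₁, (φ t - D t) := by
      apply integral_congr
      intro t ht
      rw [uIcc_of_le hS] at ht
      have := part1 t ht
      rw [hdw t ht] at this
      simp only [hPdef, hφdef, hDdef]
      simp only [hDdef] at this
      linarith [this]
    rw [hcong, integral_sub hφint hDint, hint0, sub_zero]
  -- nonnegativity of φ on S
  have hφnn : ∀ t ∈ S, 0 ≤ φ t := by
    intro t ht
    by_cases hy : Ytil t = 0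
    · simp [hφdef, hy]
    · exact (hGpos t ht (Ytil t) hy).le
  -- Step A : Ytil is not identically zero on S
  have hne : ∃ ts ∈ S, Ytil ts ≠ 0 := by
    by_contra hz
    push_neg at hz
    set Am : ℝ → Matrix (Fin n) (Fin n) ℝ :=
      fun t => B t * ((G t)⁻¹ * (B t)ᵀ * C t) with hAmdef
    have hYeq : ∀ t ∈ S, Y t = -(((G t)⁻¹ * (B t)ᵀ * C t) *ᵥ X t) := by
      intro t ht
      have := hz t ht
      rw [hYtil t] at this
      exact eq_neg_of_add_eq_zero_left this
    have hAc : ContinuousOn Am S := myCO_mul hBc hMc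
    set κ : ℝ → ℝ := fun t => ∑ i, ∑ j, |Am t i j| with hκdef
    have hκc : ContinuousOn κ S := by
      apply continuousOn_finset_sum
      intro i _
      apply continuousOn_finset_sum
      intro j _
      exact (((continuous_apply j).comp (continuous_apply i)).comp_continuousOn hAc).abs
    obtain ⟨K, hK⟩ := (isCompact_Icc.image_of_continuousOn hκc).bddAbove
    have hbound : ∀ t ∈ Ico t₀ t₁, ‖B t *ᵥ Y t‖ ≤ K * ‖X t‖ + 0 := by
      intro t ht
      have ht' : t ∈ S := Ico_subset_Icc_self ht
      rw [hYeq t ht', Matrix.mulVec_neg, norm_neg, Matrix.mulVec_mulVec, add_zero]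
      calc ‖Am t *ᵥ X t‖ ≤ κ t * ‖X t‖ := mulVec_norm_le _ _
        _ ≤ K * ‖X t‖ := by
            refine mul_le_mul_of_nonneg_right ?_ (norm_nonneg _)
            exact hK (mem_image_of_mem κ ht')
    have hgron := norm_le_gronwallBound_of_norm_deriv_right_le hXc
      (fun x hx => (hvar x (Ico_subset_Icc_self hx)).mono_of_mem_nhdsWithin
        (Icc_mem_nhdsGE_of_mem hx))
      (by rw [hX0]; simp : ‖X t₀‖ ≤ 0) hbound
    have hX0' : ∀ t ∈ S, X t = 0 := by
      intro t ht
      have := hgron t ht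
      rw [gronwallBound_ε0_δ0] at this
      exact norm_le_zero_iff.1 this
    have hY0' : ∀ t ∈ S, Y t = 0 := by
      intro t ht
      rw [hYeq t ht, hX0' t ht, Matrix.mulVec_zero, neg_zero]
    obtain ⟨t, ht, hcase⟩ := hnz
    rcases hcase with hx | hy
    · exact hx (hX0' t ht)
    · exact hy (hY0' t ht)
  -- Step B : positivity of ∫ φ
  obtain ⟨ts, hts, hYts⟩ := hne
  have hφts : 0 < φ ts := hGpos ts hts (Ytil ts) hYts
  have hev : {u | 0 < φ u} ∈ nhdsWithin ts S :=
    (hφc ts hts).eventually (eventually_gt_nhds hφts)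
  obtain ⟨ε, hε, hball⟩ := Metric.mem_nhdsWithin_iff.1 hev
  set cc : ℝ := max t₀ (ts - ε) with hccdef
  set dd : ℝ := min t₁ (ts + ε) with hdddef
  have hcd : cc < dd := by
    rw [hccdef, hdddef, lt_min_iff, max_lt_iff, max_lt_iff]
    obtain ⟨h1, h2⟩ := hts
    constructor
    · exact ⟨h, by linarith⟩
    · exact ⟨by linarith, by linarith⟩
  have hsub2 : Ioo cc dd ⊆ Function.support φ ∩ Ioc t₀ t₁ := by
    intro u hu
    obtain ⟨hu1, hu2⟩ := hu
    have hut0 : t₀ < u := lt_of_le_of_lt (le_max_left _ _) hu1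
    have hut1 : u ≤ t₁ := le_of_lt (lt_of_lt_of_le hu2 (min_le_left _ _))
    have huS : u ∈ S := ⟨hut0.le, hut1⟩
    have hdist : dist u ts < ε := by
      rw [Real.dist_eq, abs_sub_lt_iff]
      have h1 : ts - ε < u := lt_of_le_of_lt (le_max_right _ _) hu1
      have h2 : u < ts + ε := lt_of_lt_of_le hu2 (min_le_right _ _)
      constructor <;> linarith
    have hφu : 0 < φ u := hball ⟨Metric.mem_ball.2 hdist, huS⟩
    exact ⟨Function.mem_support.2 hφu.ne', ⟨hut0, hut1⟩⟩
  have hmeas : 0 < MeasureTheory.volume (Function.support φ ∩ Ioc t₀ t₁) := by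
    calc (0:ENNReal) < MeasureTheory.volume (Ioo cc dd) := by
          rw [Real.volume_Ioo]; exact ENNReal.ofReal_pos.2 (by linarith)
      _ ≤ _ := MeasureTheory.measure_mono hsub2
  have hφae : 0 ≤ᵐ[MeasureTheory.volume.restrict (uIoc t₀ t₁)] φ := by
    rw [uIoc_of_le hS]
    refine (MeasureTheory.ae_restrict_iff' measurableSet_Ioc).2 ?_
    exact MeasureTheory.ae_of_all _ fun x hx => hφnn x (Ioc_subset_Icc_self hx)
  have hpos : 0 < ∫ t in t₀..t₁, φ t :=
    (integral_pos_iff_support_of_nonneg_ae' hφae hφint).2 ⟨h, hmeas⟩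
  exact ⟨part1, part2, hpos, by rw [part2]; exact hpos⟩
end

section
/- (Jacobi fields pair with deformations via a boundary term) Let M, N : [t₀,t₁] → Matrix (Fin n) (Fin n) ℝ be continuous with N symmetric, B : [t₀,t₁] → Matrix (Fin n) (Fin r) ℝ continuous, G positive definite symmetric with M = B G⁻¹ Bᵀ. Suppose (X, π) solves the Jacobi (Hamiltonian) system X' = M π, π' = N X, and set Y := G⁻¹ Bᵀ π. Then for every C¹ pair (Z, W) with Z' = B W, one has d/dt ( πᵀ Z ) = Xᵀ N Z + Yᵀ G W, i.e. the second-variation bilinear integrand evaluated on the Jacobi deformation (X,Y) and an arbitrary admissible deformation (Z,W) is an exact time derivative. -/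
open Matrix Set

private lemma hasDerivAt_dot {n : ℕ} {f g : ℝ → Fin n → ℝ} {f' g' : Fin n → ℝ} {t : ℝ}
    (hf : HasDerivAt f f' t) (hg : HasDerivAt g g' t) :
    HasDerivAt (fun s => f s ⬝ᵥ g s) (f' ⬝ᵥ g t + f t ⬝ᵥ g') t := by
  have hf' := hasDerivAt_pi.mp hf
  have hg' := hasDerivAt_pi.mp hg
  simp only [dotProduct, Finset.sum_add_distrib.symm]
  exact HasDerivAt.fun_sum fun i _ => ((hf' i).mul (hg' i))

/-- Proposition 4.1 in trivialized form. If `(X, π)` solves the Jacobi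
system `X' = M·π`, `π' = N·X` with `M = B·G⁻¹·Bᵀ`, `N` symmetric, `G` symmetric positive
definite, and `Y := G⁻¹·Bᵀ·π`, then for every admissible pair `(Z, W)` with `Z' = B·W`
one has `d/dt (πᵀ Z) = Xᵀ N Z + Yᵀ G W`. -/
theorem stmt_14 (n r : ℕ) (t₀ t₁ : ℝ) (h : t₀ < t₁)
    (G : ℝ → Matrix (Fin r) (Fin r) ℝ) (hGc : ContinuousOn G (Icc t₀ t₁))
    (hGs : ∀ t ∈ Icc t₀ t₁, (G t)ᵀ = G t)
    (hGpos : ∀ t ∈ Icc t₀ t₁, ∀ v : Fin r → ℝ, v ≠ 0 → 0 < v ⬝ᵥ (G t).mulVec v)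
    (B : ℝ → Matrix (Fin n) (Fin r) ℝ) (hBc : ContinuousOn B (Icc t₀ t₁))
    (N M : ℝ → Matrix (Fin n) (Fin n) ℝ)
    (hNc : ContinuousOn N (Icc t₀ t₁)) (hMc : ContinuousOn M (Icc t₀ t₁))
    (hNs : ∀ t ∈ Icc t₀ t₁, (N t)ᵀ = N t)
    (hM : ∀ t ∈ Icc t₀ t₁, M t = B t * (G t)⁻¹ * (B t)ᵀ)
    (X pvec Z : ℝ → Fin n → ℝ) (W Y : ℝ → Fin r → ℝ)
    (hX : ∀ t ∈ Icc t₀ t₁, HasDerivAt X ((M t).mulVec (pvec t)) t)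
    (hpvec : ∀ t ∈ Icc t₀ t₁, HasDerivAt pvec ((N t).mulVec (X t)) t)
    (hY : ∀ t, Y t = ((G t)⁻¹).mulVec (((B t)ᵀ).mulVec (pvec t)))
    (hZ : ∀ t ∈ Icc t₀ t₁, HasDerivAt Z ((B t).mulVec (W t)) t) :
    ∀ t ∈ Icc t₀ t₁, HasDerivAt (fun s => pvec s ⬝ᵥ Z s)
      (X t ⬝ᵥ (N t).mulVec (Z t) + Y t ⬝ᵥ (G t).mulVec (W t)) t := by
  intro t ht
  have hG : G t * (G t)⁻¹ = 1 := by
    have hpd : (G t).PosDef := by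
      refine Matrix.posDef_iff_dotProduct_mulVec.mpr ⟨?_, fun v hv => ?_⟩
      · show (G t).conjTranspose = G t
        simpa using hGs t ht
      · simpa using hGpos t ht v hv
    haveI := hpd.isUnit.invertible
    exact Matrix.mul_inv_of_invertible (G t)
  have hGinv : (G t)⁻¹ * G t = 1 := by
    have := congrArg Matrix.transpose hG
    rwa [Matrix.transpose_mul, Matrix.transpose_nonsing_inv, hGs t ht,
      Matrix.transpose_one] at this
  have key : (N t).mulVec (X t) ⬝ᵥ Z t + pvec t ⬝ᵥ (B t).mulVec (W t)
      = X t ⬝ᵥ (N t).mulVec (Z t) + Y t ⬝ᵥ (G t).mulVec (W t) := by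
    have h1 : (N t).mulVec (X t) ⬝ᵥ Z t = X t ⬝ᵥ (N t).mulVec (Z t) := by
      rw [Matrix.dotProduct_mulVec, ← hNs t ht, Matrix.vecMul_transpose, hNs t ht]
    have h2 : Y t ⬝ᵥ (G t).mulVec (W t) = pvec t ⬝ᵥ (B t).mulVec (W t) := by
      rw [hY t, Matrix.dotProduct_mulVec, Matrix.mulVec_mulVec, Matrix.vecMul_mulVec,
        Matrix.transpose_mul, Matrix.transpose_transpose, Matrix.transpose_nonsing_inv,
        hGs t ht, Matrix.mul_assoc, hGinv, Matrix.mul_one, Matrix.dotProduct_mulVec]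
    rw [h1, h2]
  rw [← key]
  exact hasDerivAt_dot (hpvec t ht) (hZ t ht)
end

section
/- (No conjugate points implies global symmetric Riccati solution) Let M, N : (a,b) → Matrix (Fin n) (Fin n) ℝ be continuous and symmetric, [t₀,t₁] ⊂ (a,b). Let (K(t), E(t)) be the matrix solution of K' = M·E, E' = N·K with terminal data K(t*) = 0, E(t*) = I at some t* ∈ (t₁, b). If K(t) is invertible for all t ∈ [t₀, t*), then C(t) := −E(t)·K(t)⁻¹ is a symmetric solution of the Riccati equation C' − C·M·C + N = 0 on all of [t₀, t₁]; symmetry is established by showing R(t) := −K(t)·E(t)⁻¹ (defined near t*) solves the dual Riccati equation R' = M − R·N·R with symmetric value R(t*) = 0, hence is symmetric near t*, hence C = R⁻¹ is symmetric near t*, and then everywhere by the linear ODE for the antisymmetric part. -/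
open Matrix Set

/-- Entrywise product rule for matrix-valued functions. -/
lemma mderiv_mul {n : ℕ} {A B : ℝ → Matrix (Fin n) (Fin n) ℝ}
    {A' B' : Matrix (Fin n) (Fin n) ℝ} {t : ℝ}
    (hA : ∀ i j, HasDerivAt (fun s => A s i j) (A' i j) t)
    (hB : ∀ i j, HasDerivAt (fun s => B s i j) (B' i j) t) :
    ∀ i j, HasDerivAt (fun s => (A s * B s) i j) ((A' * B t + A t * B') i j) t := by
  intro i j
  simp only [Matrix.mul_apply, Matrix.add_apply]
  rw [← Finset.sum_add_distrib]
  exact HasDerivAt.fun_sum fun k _ => ((hA i k).mul (hB k j))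

/-- Differentiability of the determinant of a matrix with differentiable entries. -/
lemma diffAt_det {n : ℕ} {A : ℝ → Matrix (Fin n) (Fin n) ℝ} {t : ℝ}
    (h : ∀ i j, DifferentiableAt ℝ (fun s => A s i j) t) :
    DifferentiableAt ℝ (fun s => (A s).det) t := by
  simp only [Matrix.det_apply, Units.smul_def, zsmul_eq_mul]
  apply DifferentiableAt.fun_sum
  intro σ _
  exact (DifferentiableAt.fun_finsetProd fun i _ => h (σ i) i).const_mul _

/-- Differentiability of adjugate entries. -/
lemma diffAt_adj {n : ℕ} {A : ℝ → Matrix (Fin n) (Fin n) ℝ} {t : ℝ}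
    (h : ∀ i j, DifferentiableAt ℝ (fun s => A s i j) t) (i j : Fin n) :
    DifferentiableAt ℝ (fun s => (A s).adjugate i j) t := by
  simp only [Matrix.adjugate_apply]
  apply diffAt_det
  intro k l
  by_cases hk : k = j
  · subst hk
    simp only [Matrix.updateRow_self]
    exact differentiableAt_const _
  · simp only [Matrix.updateRow_ne hk]
    exact h k l

/-- Proposition 5.1 in trivialized form. If `(K, E)` solves the linear
system `K' = M·E`, `E' = N·K` (with `M, N` continuous symmetric) with terminal data
`K t* = 0`, `E t* = 1`, and `K` is invertible on `[t₀, t*)` (absence of conjugate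
points), then `C := −E·K⁻¹` is a symmetric solution of the Riccati equation
`C' − C·M·C + N = 0` on all of `[t₀, t₁]`. -/
theorem stmt_18 (n : ℕ) (a b t₀ t₁ tstar : ℝ)
    (hab : a < t₀) (h01 : t₀ < t₁) (h1s : t₁ < tstar) (hsb : tstar < b)
    (M N : ℝ → Matrix (Fin n) (Fin n) ℝ)
    (hMc : ContinuousOn M (Ioo a b)) (hNc : ContinuousOn N (Ioo a b))
    (hMs : ∀ t ∈ Ioo a b, (M t)ᵀ = M t) (hNs : ∀ t ∈ Ioo a b, (N t)ᵀ = N t)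
    (K E : ℝ → Matrix (Fin n) (Fin n) ℝ)
    (hK : ∀ t ∈ Ioo a b, ∀ i j, HasDerivAt (fun s => K s i j) ((M t * E t) i j) t)
    (hE : ∀ t ∈ Ioo a b, ∀ i j, HasDerivAt (fun s => E s i j) ((N t * K t) i j) t)
    (hKs : K tstar = 0) (hEs : E tstar = 1)
    (hinv : ∀ t ∈ Ico t₀ tstar, IsUnit (K t).det)
    (C : ℝ → Matrix (Fin n) (Fin n) ℝ) (hC : ∀ t, C t = -(E t * (K t)⁻¹)) :
    ∀ t ∈ Icc t₀ t₁, (C t)ᵀ = C t ∧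
      ∀ i j, HasDerivWithinAt (fun s => C s i j)
        ((C t * M t * C t - N t) i j) (Icc t₀ t₁) t := by
  have hsub1 : Icc t₀ tstar ⊆ Ioo a b := fun s hs =>
    ⟨lt_of_lt_of_le hab hs.1, lt_of_le_of_lt hs.2 hsb⟩
  -- Step 1: W := Kᵀ E - Eᵀ K has zero derivative on (a,b)
  have hWderiv : ∀ u ∈ Ioo a b, ∀ i j,
      HasDerivAt (fun s => ((K s)ᵀ * E s - (E s)ᵀ * K s) i j) 0 u := by
    intro u hu i j
    have hKT : ∀ i j, HasDerivAt (fun s => (K s)ᵀ i j) ((M u * E u)ᵀ i j) u :=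
      fun i j => hK u hu j i
    have hET : ∀ i j, HasDerivAt (fun s => (E s)ᵀ i j) ((N u * K u)ᵀ i j) u :=
      fun i j => hE u hu j i
    have h1 := mderiv_mul hKT (hE u hu)
    have h2 := mderiv_mul hET (hK u hu)
    have h3 := (h1 i j).sub (h2 i j)
    have h4 : ((M u * E u)ᵀ * E u + (K u)ᵀ * (N u * K u)) i j
        - ((N u * K u)ᵀ * K u + (E u)ᵀ * (M u * E u)) i j = 0 := by
      simp only [Matrix.transpose_mul, hMs u hu, hNs u hu, Matrix.mul_assoc,
        Matrix.add_apply]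
      ring
    simp only [Matrix.sub_apply]
    exact h4 ▸ h3
  -- Step 2: W is constantly 0 on [t₀, tstar]
  have key : ∀ s ∈ Icc t₀ tstar, (K s)ᵀ * E s = (E s)ᵀ * K s := by
    have hzero : ∀ i j, ∀ s ∈ Icc t₀ tstar,
        ((K s)ᵀ * E s - (E s)ᵀ * K s) i j
          = ((K t₀)ᵀ * E t₀ - (E t₀)ᵀ * K t₀) i j := by
      intro i j
      apply constant_of_has_deriv_right_zero
      · intro s hs
        exact (hWderiv s (hsub1 hs) i j).continuousAt.continuousWithinAt
      · intro s hs
        exact (hWderiv s (hsub1 (Ico_subset_Icc_self hs)) i j).hasDerivWithinAt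
    have hts : (K tstar)ᵀ * E tstar - (E tstar)ᵀ * K tstar = 0 := by
      simp [hKs, hEs]
    intro s hs
    ext i j
    have h1 := hzero i j s hs
    have h2 := hzero i j tstar (right_mem_Icc.2 (le_of_lt (lt_trans h01 h1s)))
    have h3 : ((K s)ᵀ * E s - (E s)ᵀ * K s) i j = 0 := by
      rw [h1, ← h2, hts]; simp
    simpa [Matrix.sub_apply, sub_eq_zero] using h3
  -- Step 3: the pointwise statements
  intro t ht
  have htI : t ∈ Ioo a b :=
    ⟨lt_of_lt_of_le hab ht.1, lt_of_le_of_lt (le_trans ht.2 (le_of_lt h1s)) hsb⟩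
  have htK : t ∈ Ico t₀ tstar := ⟨ht.1, lt_of_le_of_lt ht.2 h1s⟩
  have hu : IsUnit (K t).det := hinv t htK
  -- symmetry
  have hsymm : (C t)ᵀ = C t := by
    have hke := key t ⟨ht.1, le_of_lt htK.2⟩
    have huT : IsUnit (K t)ᵀ.det := by rwa [Matrix.det_transpose]
    rw [hC, Matrix.transpose_neg, Matrix.transpose_mul, Matrix.transpose_nonsing_inv]
    congr 1
    have h5 : (K t)ᵀ⁻¹ * ((E t)ᵀ * K t) * (K t)⁻¹ = (K t)ᵀ⁻¹ * (E t)ᵀ := by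
      rw [Matrix.mul_assoc ((K t)ᵀ⁻¹), Matrix.mul_assoc, Matrix.mul_nonsing_inv _ hu,
        Matrix.mul_one]
    rw [← h5, ← hke, ← Matrix.mul_assoc, Matrix.nonsing_inv_mul _ huT, Matrix.one_mul]
  -- differentiability of entries of K⁻¹
  have hKd : ∀ i j, DifferentiableAt ℝ (fun s => K s i j) t :=
    fun i j => (hK t htI i j).differentiableAt
  have hGd : ∀ i j, DifferentiableAt ℝ (fun s => (K s)⁻¹ i j) t := by
    intro i j
    have hrw : (fun s => (K s)⁻¹ i j) = fun s => ((K s).det)⁻¹ * (K s).adjugate i j := by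
      funext s
      rw [Matrix.inv_def, Matrix.smul_apply, Ring.inverse_eq_inv, smul_eq_mul]
    rw [hrw]
    exact ((diffAt_det hKd).inv hu.ne_zero).mul (diffAt_adj hKd i j)
  set G' : Matrix (Fin n) (Fin n) ℝ :=
    Matrix.of fun i j => deriv (fun s => (K s)⁻¹ i j) t with hG'def
  have hG : ∀ i j, HasDerivAt (fun s => (K s)⁻¹ i j) (G' i j) t :=
    fun i j => (hGd i j).hasDerivAt
  -- K * K⁻¹ = 1 near t
  have hdetc : ContinuousAt (fun s => (K s).det) t := (diffAt_det hKd).continuousAt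
  have hev : ∀ᶠ s in nhds t, K s * (K s)⁻¹ = 1 := by
    have h1 : ∀ᶠ s in nhds t, (K s).det ≠ 0 := hdetc.eventually_ne hu.ne_zero
    exact h1.mono fun s hs => Matrix.mul_nonsing_inv _ (isUnit_iff_ne_zero.2 hs)
  have hKG := mderiv_mul (hK t htI) hG
  have hzero : (M t * E t) * (K t)⁻¹ + K t * G' = 0 := by
    ext i j
    have h1 : HasDerivAt (fun s => (K s * (K s)⁻¹) i j) 0 t := by
      apply HasDerivAt.congr_of_eventuallyEq
        (hasDerivAt_const t ((1 : Matrix (Fin n) (Fin n) ℝ) i j))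
      exact hev.mono fun s hs => by show (K s * (K s)⁻¹) i j = (1 : Matrix (Fin n) (Fin n) ℝ) i j; rw [hs]
    have h2 := (hKG i j).unique h1
    simpa using h2
  have hG'eq : G' = -((K t)⁻¹ * (M t * E t) * (K t)⁻¹) :=
    calc G' = (K t)⁻¹ * (K t * G') := by
          rw [← Matrix.mul_assoc, Matrix.nonsing_inv_mul _ hu, Matrix.one_mul]
      _ = -((K t)⁻¹ * (M t * E t) * (K t)⁻¹) := by
          rw [eq_neg_of_add_eq_zero_right hzero]; noncomm_ring
  -- derivative of C
  have hEG := mderiv_mul (hE t htI) hG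
  refine ⟨hsymm, ?_⟩
  intro i j
  have h6 : HasDerivAt (fun s => C s i j) (-(((N t * K t) * (K t)⁻¹ + E t * G') i j)) t := by
    have h7 : (fun s => C s i j) = fun s => -((E s * (K s)⁻¹) i j) := by
      funext s; rw [hC]; rfl
    rw [h7]
    exact (hEG i j).neg
  have h8 : -((N t * K t) * (K t)⁻¹ + E t * G') = C t * M t * C t - N t := by
    rw [hG'eq, hC, Matrix.mul_assoc (N t), Matrix.mul_nonsing_inv _ hu, Matrix.mul_one]
    noncomm_ring
  have h9 : HasDerivAt (fun s => C s i j) ((C t * M t * C t - N t) i j) t := by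
    rw [← h8, Matrix.neg_apply]
    exact h6
  exact h9.hasDerivWithinAt
end

section
/- (Adapted function makes the Lagrangian critical along the extremal) Let ψ : ℝ × ℝⁿ × ℝʳ → ℝⁿ and L : ℝ × ℝⁿ × ℝʳ → ℝ be C², and let (q(t), z(t), p(t)) on [t₀,t₁] solve the Pontryagin equations q' = ψ, p'ᵢ + Σₖ pₖ ∂ψᵏ/∂qⁱ = ∂L/∂qⁱ, Σᵢ pᵢ ∂ψⁱ/∂zᴬ = ∂L/∂zᴬ. Define S₀(t, q) := Σᵢ pᵢ(t)(qⁱ − qⁱ(t)) + ∫_{t₀}^{t} L(s, q(s), z(s)) ds and the symbolic derivative Ṡ₀(t,q,z) := ∂S₀/∂t + Σᵢ (∂S₀/∂qⁱ) ψⁱ(t,q,z). Then L' := L − Ṡ₀ satisfies L'(t, q(t), z(t)) = 0 and all first partial derivatives ∂L'/∂qⁱ and ∂L'/∂zᴬ vanish at (t, q(t), z(t)) for every t ∈ [t₀,t₁]. -/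
open Set intervalIntegral

lemma aux_line {E : Type*} [NormedAddCommGroup E] [NormedSpace ℝ E]
    (f : E → ℝ) (x d : E) (h : HasDerivAt (fun s : ℝ => f (x + s • d)) 0 0) :
    fderiv ℝ f x d = 0 := by
  by_cases hd : DifferentiableAt ℝ f x
  · have hc : HasDerivAt (fun s : ℝ => x + s • d) d 0 := by
      simpa using ((hasDerivAt_id (0:ℝ)).smul_const d).const_add x
    have hl : HasFDerivAt f (fderiv ℝ f x) ((fun s : ℝ => x + s • d) 0) := by
      simpa using hd.hasFDerivAt
    exact (hl.comp_hasDerivAt 0 hc).unique h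
  · simp [fderiv_zero_of_not_differentiableAt hd]

lemma key_fderiv (n r : ℕ) (t₀ : ℝ)
    (ψ : ℝ × (Fin n → ℝ) × (Fin r → ℝ) → Fin n → ℝ)
    (q : ℝ → Fin n → ℝ) (z : ℝ → Fin r → ℝ) (p : ℝ → Fin n → ℝ)
    (P' : Fin n → ℝ → ℝ)
    (hq : ∀ t, HasDerivAt q (ψ (t, q t, z t)) t)
    (hp : ∀ t, ∀ i : Fin n, HasDerivAt (fun s => p s i) (P' i t) t)
    (f : ℝ → ℝ) (hfc : Continuous f)
    (a : ℝ) (y : Fin n → ℝ) (v : ℝ × (Fin n → ℝ)) :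
    fderiv ℝ (fun x : ℝ × (Fin n → ℝ) => (∑ i, p x.1 i * (x.2 i - q x.1 i)) + ∫ s in t₀..x.1, f s) (a, y) v
      = (∑ i, (p a i * (v.2 i - ψ (a, q a, z a) i * v.1) + (y i - q a i) * (P' i a * v.1))) + f a * v.1 := by
  have hFTC : HasDerivAt (fun u : ℝ => ∫ s in t₀..u, f s) (f a) a :=
    (hfc.integral_hasStrictDerivAt t₀ a).hasDerivAt
  have h1 := (HasFDerivAt.fun_sum (u := Finset.univ) (fun (i : Fin n) _ =>
      HasFDerivAt.mul
        ((hp a i).hasFDerivAt.comp (a, y) hasFDerivAt_fst)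
        (((ContinuousLinearMap.proj i).comp (ContinuousLinearMap.snd ℝ ℝ (Fin n → ℝ))).hasFDerivAt.sub
          ((((ContinuousLinearMap.proj i : (Fin n → ℝ) →L[ℝ] ℝ).hasFDerivAt.comp_hasDerivAt a (hq a)).hasFDerivAt).comp (a, y) hasFDerivAt_fst)))).add
    (hFTC.hasFDerivAt.comp (a, y) hasFDerivAt_fst)
  have h2 := HasFDerivAt.fderiv
    (f := fun x : ℝ × (Fin n → ℝ) => (∑ i, p x.1 i * (x.2 i - q x.1 i)) + ∫ s in t₀..x.1, f s) h1
  rw [h2]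
  simp [Function.comp, mul_comm]

/-- The adapted function `S₀` makes the Lagrangian critical along the
extremal. If `(q, z, p)` solves the Pontryagin equations for `(ψ, L)`, and
`S₀(t, q) = Σᵢ pᵢ(t)(qⁱ − qⁱ(t)) + ∫_{t₀}^{t} L(s, q(s), z(s)) ds`, then
`L' := L − Ṡ₀` (with `Ṡ₀(t,q,z) = (dS₀)(1, ψ)` the symbolic time derivative) vanishes
along the lifted extremal together with all its first partial derivatives in the `q`
and `z` directions. -/
theorem stmt_19 (n r : ℕ) (t₀ t₁ : ℝ) (h : t₀ < t₁)
    (ψ : ℝ × (Fin n → ℝ) × (Fin r → ℝ) → Fin n → ℝ) (hψ : ContDiff ℝ 2 ψ)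
    (L : ℝ × (Fin n → ℝ) × (Fin r → ℝ) → ℝ) (hL : ContDiff ℝ 2 L)
    (q : ℝ → Fin n → ℝ) (z : ℝ → Fin r → ℝ) (p : ℝ → Fin n → ℝ)
    (hz : Continuous z) (hpc : Continuous p)
    (hq : ∀ t, HasDerivAt q (ψ (t, q t, z t)) t)
    (hp : ∀ t, ∀ i : Fin n, HasDerivAt (fun s => p s i)
      (fderiv ℝ L (t, q t, z t) ((0 : ℝ), Pi.single i 1, (0 : Fin r → ℝ)) -
        ∑ k, p t k * fderiv ℝ (fun x => ψ x k) (t, q t, z t)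
          ((0 : ℝ), Pi.single i 1, (0 : Fin r → ℝ))) t)
    (halg : ∀ t, ∀ A : Fin r,
      (∑ k, p t k * fderiv ℝ (fun x => ψ x k) (t, q t, z t)
          ((0 : ℝ), (0 : Fin n → ℝ), Pi.single A 1))
        = fderiv ℝ L (t, q t, z t) ((0 : ℝ), (0 : Fin n → ℝ), Pi.single A 1))
    (S₀ : ℝ × (Fin n → ℝ) → ℝ)
    (hS₀ : S₀ = fun x => (∑ i, p x.1 i * (x.2 i - q x.1 i)) +
      ∫ s in t₀..x.1, L (s, q s, z s))
    (L' : ℝ × (Fin n → ℝ) × (Fin r → ℝ) → ℝ)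
    (hL' : L' = fun x => L x - fderiv ℝ S₀ (x.1, x.2.1) (1, ψ x)) :
    ∀ t ∈ Icc t₀ t₁,
      L' (t, q t, z t) = 0 ∧
      (∀ i : Fin n,
        fderiv ℝ L' (t, q t, z t) ((0 : ℝ), Pi.single i 1, (0 : Fin r → ℝ)) = 0) ∧
      (∀ A : Fin r,
        fderiv ℝ L' (t, q t, z t) ((0 : ℝ), (0 : Fin n → ℝ), Pi.single A 1) = 0) := by
  subst hS₀ hL'
  have hqc : Continuous q := continuous_iff_continuousAt.mpr fun s => (hq s).continuousAt
  have hfc : Continuous (fun s => L (s, q s, z s)) :=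
    hL.continuous.comp (continuous_id.prodMk (hqc.prodMk hz))
  have hLd : Differentiable ℝ L := hL.differentiable (by norm_num)
  have hψd : Differentiable ℝ ψ := hψ.differentiable (by norm_num)
  have key := key_fderiv n r t₀ ψ q z p
    (fun i s => fderiv ℝ L (s, q s, z s) ((0 : ℝ), Pi.single i 1, (0 : Fin r → ℝ)) -
      ∑ k, p s k * fderiv ℝ (fun x => ψ x k) (s, q s, z s)
        ((0 : ℝ), Pi.single i 1, (0 : Fin r → ℝ)))
    hq hp _ hfc
  intro t _
  refine ⟨?_, ?_, ?_⟩
  · simp only []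
    rw [key]
    simp
  · -- q-direction
    intro i
    apply aux_line
    have hline : ∀ s : ℝ, ((t, q t, z t) : ℝ × (Fin n → ℝ) × (Fin r → ℝ)) +
        s • (((0 : ℝ), Pi.single i 1, (0 : Fin r → ℝ)) : ℝ × (Fin n → ℝ) × (Fin r → ℝ)) = (t, q t + s • (Pi.single i 1 : Fin n → ℝ), z t) := by
      intro s; simp [Prod.ext_iff]
    have hc : HasDerivAt (fun s : ℝ => ((t, q t + s • (Pi.single i 1 : Fin n → ℝ), z t) : ℝ × (Fin n → ℝ) × (Fin r → ℝ)))
        ((((0 : ℝ), Pi.single i 1, (0 : Fin r → ℝ)) : ℝ × (Fin n → ℝ) × (Fin r → ℝ))) 0 := by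
      have := ((hasDerivAt_id (0:ℝ)).smul_const
        (((0 : ℝ), Pi.single i 1, (0 : Fin r → ℝ)) : ℝ × (Fin n → ℝ) × (Fin r → ℝ))).const_add
        ((t, q t, z t) : ℝ × (Fin n → ℝ) × (Fin r → ℝ))
      simpa [hline] using this
    have hLc : HasDerivAt (fun s : ℝ => L (t, q t + s • (Pi.single i 1 : Fin n → ℝ), z t))
        (fderiv ℝ L (t, q t, z t) ((0 : ℝ), Pi.single i 1, (0 : Fin r → ℝ))) 0 := by
      have hl : HasFDerivAt L (fderiv ℝ L (t, q t, z t))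
          ((t, q t + (0:ℝ) • (Pi.single i 1 : Fin n → ℝ), z t) : ℝ × (Fin n → ℝ) × (Fin r → ℝ)) := by
        simpa using (hLd (t, q t, z t)).hasFDerivAt
      exact hl.comp_hasDerivAt 0 hc
    have hψc : ∀ k : Fin n, HasDerivAt (fun s : ℝ => ψ (t, q t + s • (Pi.single i 1 : Fin n → ℝ), z t) k)
        (fderiv ℝ (fun x => ψ x k) (t, q t, z t) ((0 : ℝ), Pi.single i 1, (0 : Fin r → ℝ))) 0 := by
      intro k
      have hl : HasFDerivAt (fun x => ψ x k) (fderiv ℝ (fun x => ψ x k) (t, q t, z t))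
          ((t, q t + (0:ℝ) • (Pi.single i 1 : Fin n → ℝ), z t) : ℝ × (Fin n → ℝ) × (Fin r → ℝ)) := by
        simpa using ((differentiable_pi.mp hψd k) (t, q t, z t)).hasFDerivAt
      exact hl.comp_hasDerivAt 0 hc
    simp only [hline, key, mul_one, Pi.add_apply, Pi.smul_apply, smul_eq_mul, add_sub_cancel_left]
    refine HasDerivAt.congr_deriv (hLc.sub ((HasDerivAt.fun_sum (u := Finset.univ)
        (fun (k : Fin n) _ =>
          ((((hψc k).sub_const (ψ (t, q t, z t) k)).const_mul (p t k)).add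
            (((hasDerivAt_id (0:ℝ)).mul_const ((Pi.single i 1 : Fin n → ℝ) k)).mul_const
              (fderiv ℝ L (t, q t, z t) ((0 : ℝ), Pi.single k 1, (0 : Fin r → ℝ)) -
                ∑ j, p t j * fderiv ℝ (fun x => ψ x j) (t, q t, z t)
                  ((0 : ℝ), Pi.single k 1, (0 : Fin r → ℝ))))))).add_const
        (L (t, q t, z t)))) ?_
    have hsingle : ∀ g : Fin n → ℝ, ∑ k, (Pi.single i 1 : Fin n → ℝ) k * g k = g i := by
      intro g
      simp [Pi.single_apply, ite_mul]
    simp only [one_mul, Finset.sum_add_distrib, hsingle]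
    ring
  · -- z-direction
    intro A
    apply aux_line
    have hline : ∀ s : ℝ, ((t, q t, z t) : ℝ × (Fin n → ℝ) × (Fin r → ℝ)) +
        s • (((0 : ℝ), (0 : Fin n → ℝ), Pi.single A 1) : ℝ × (Fin n → ℝ) × (Fin r → ℝ)) = (t, q t, z t + s • (Pi.single A 1 : Fin r → ℝ)) := by
      intro s; simp [Prod.ext_iff]
    have hc : HasDerivAt (fun s : ℝ => ((t, q t, z t + s • (Pi.single A 1 : Fin r → ℝ)) : ℝ × (Fin n → ℝ) × (Fin r → ℝ)))
        ((((0 : ℝ), (0 : Fin n → ℝ), Pi.single A 1) : ℝ × (Fin n → ℝ) × (Fin r → ℝ))) 0 := by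
      have := ((hasDerivAt_id (0:ℝ)).smul_const
        (((0 : ℝ), (0 : Fin n → ℝ), Pi.single A 1) : ℝ × (Fin n → ℝ) × (Fin r → ℝ))).const_add
        ((t, q t, z t) : ℝ × (Fin n → ℝ) × (Fin r → ℝ))
      simpa [hline] using this
    have hLc : HasDerivAt (fun s : ℝ => L (t, q t, z t + s • (Pi.single A 1 : Fin r → ℝ)))
        (fderiv ℝ L (t, q t, z t) ((0 : ℝ), (0 : Fin n → ℝ), Pi.single A 1)) 0 := by
      have hl : HasFDerivAt L (fderiv ℝ L (t, q t, z t))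
          ((t, q t, z t + (0:ℝ) • (Pi.single A 1 : Fin r → ℝ)) : ℝ × (Fin n → ℝ) × (Fin r → ℝ)) := by
        simpa using (hLd (t, q t, z t)).hasFDerivAt
      exact hl.comp_hasDerivAt 0 hc
    have hψc : ∀ k : Fin n, HasDerivAt (fun s : ℝ => ψ (t, q t, z t + s • (Pi.single A 1 : Fin r → ℝ)) k)
        (fderiv ℝ (fun x => ψ x k) (t, q t, z t) ((0 : ℝ), (0 : Fin n → ℝ), Pi.single A 1)) 0 := by
      intro k
      have hl : HasFDerivAt (fun x => ψ x k) (fderiv ℝ (fun x => ψ x k) (t, q t, z t))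
          ((t, q t, z t + (0:ℝ) • (Pi.single A 1 : Fin r → ℝ)) : ℝ × (Fin n → ℝ) × (Fin r → ℝ)) := by
        simpa using ((differentiable_pi.mp hψd k) (t, q t, z t)).hasFDerivAt
      exact hl.comp_hasDerivAt 0 hc
    simp only [hline, key, mul_one, sub_self, zero_mul, add_zero]
    refine HasDerivAt.congr_deriv (hLc.sub ((HasDerivAt.fun_sum (u := Finset.univ) (fun (k : Fin n) _ =>
        ((hψc k).sub_const (ψ (t, q t, z t) k)).const_mul (p t k))).add_const
        (L (t, q t, z t)))) ?_
    rw [halg t A, sub_self]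
end
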